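/- Let L be a simple split δ Jordan-Lie algebra with symmetric root system Λ. Then any two nonzero roots α, β ∈ Λ are connected. -/
import Mathlib


/-- A δ Jordan-Lie algebra: a vector space with a bilinear bracket satisfying
`[x,y] = -δ[y,x]` and `[x,[y,z]] = δ[[x,y],z] + δ[y,[x,z]]` with `δ = ±1`. -/
structure DeltaJordanLie (K L : Type*) [Field K] [AddCommGroup L] [Module K L] where
  br : L →ₗ[K] L →ₗ[K] L
  delta : K
  delta_pm : delta = 1 ∨ delta = -1
  anti : ∀ x y : L, br x y = -(delta • br y x)
  jacobi : ∀ x y z : L, br x (br y z) = delta • br (br x y) z + delta • br y (br x z)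

variable {K L : Type*} [Field K] [AddCommGroup L] [Module K L]

/-- The root space `L_α = {v ∈ L : [h,v] = α(h)v for all h ∈ H}`. -/
def DeltaJordanLie.rootSpace (J : DeltaJordanLie K L) (H : Submodule K L)
    (α : Module.Dual K H) : Submodule K L where
  carrier := {v : L | ∀ h : H, J.br (h : L) v = α h • v}
  zero_mem' := by intro h; simp
  add_mem' := by intro a b ha hb h; simp [ha h, hb h, smul_add]
  smul_mem' := by intro c a ha h; rw [map_smul, ha h, smul_comm]

/-- The root system `Λ = {α ∈ H* \ {0} : L_α ≠ 0}`. -/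
def DeltaJordanLie.roots (J : DeltaJordanLie K L) (H : Submodule K L) :
    Set (Module.Dual K H) :=
  {α | α ≠ 0 ∧ J.rootSpace H α ≠ ⊥}

/-- `H` is a splitting Cartan subalgebra: a maximal abelian subalgebra such that
`L` decomposes as the direct sum of the simultaneous eigenspaces `L_α`, with `L_0 = H`. -/
structure DeltaJordanLie.IsSplitting (J : DeltaJordanLie K L) (H : Submodule K L) : Prop where
  abelian : ∀ x ∈ H, ∀ y ∈ H, J.br x y = 0
  maximal : ∀ H' : Submodule K L, H ≤ H' →
      (∀ x ∈ H', ∀ y ∈ H', J.br x y = 0) → H' = H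
  zero_rootSpace : J.rootSpace H 0 = H
  indep : iSupIndep (fun α : Module.Dual K H => J.rootSpace H α)
  decomp : (⨆ α : Module.Dual K H, J.rootSpace H α) = ⊤

/-- The root system is symmetric. -/
def DeltaJordanLie.SymmetricRoots (J : DeltaJordanLie K L) (H : Submodule K L) : Prop :=
  ∀ α ∈ J.roots H, -α ∈ J.roots H

/-- The δ-twisted partial sums of a sequence of roots:
`s₀ = f 0`, `s_{k+1} = δ • (s_k + f (k+1))`, so that
`s_k = δ^k f 0 + δ^k f 1 + δ^{k-1} f 2 + ⋯ + δ f k`. -/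
def connSum {H : Submodule K L} (d : K) (f : ℕ → Module.Dual K H) : ℕ → Module.Dual K H
  | 0 => f 0
  | k + 1 => d • (connSum d f k + f (k + 1))

/-- `f 0, …, f n` is a connection from `α` to `β`: all terms are roots, `f 0 = α`,
all proper δ-twisted partial sums are roots, and the final sum is `±β`. -/
def IsConnection (J : DeltaJordanLie K L) (H : Submodule K L)
    (α β : Module.Dual K H) (n : ℕ) (f : ℕ → Module.Dual K H) : Prop :=
  (∀ i ≤ n, f i ∈ J.roots H) ∧ f 0 = α ∧
  (∀ k < n, connSum J.delta f k ∈ J.roots H) ∧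
  (connSum J.delta f n = β ∨ connSum J.delta f n = -β)

/-- `α` and `β` are connected. -/
def Connected (J : DeltaJordanLie K L) (H : Submodule K L)
    (α β : Module.Dual K H) : Prop :=
  ∃ n f, IsConnection J H α β n f

/-- `Λ_α`: the set of nonzero roots connected to `α`. -/
def connectedRoots (J : DeltaJordanLie K L) (H : Submodule K L)
    (α : Module.Dual K H) : Set (Module.Dual K H) :=
  {β ∈ J.roots H | Connected J H α β}

/-- An ideal of a δ Jordan-Lie algebra: a submodule with `[I,L] ⊆ I` and `[L,I] ⊆ I`. -/
def IsIdeal (J : DeltaJordanLie K L) (I : Submodule K L) : Prop :=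
  ∀ x ∈ I, ∀ y : L, J.br x y ∈ I ∧ J.br y x ∈ I

/-- `H_S = span{[L_β, L_{-β}] : β ∈ S}`. -/
def rootSpan (J : DeltaJordanLie K L) (H : Submodule K L)
    (S : Set (Module.Dual K H)) : Submodule K L :=
  Submodule.span K {z : L | ∃ β ∈ S, ∃ x ∈ J.rootSpace H β, ∃ y ∈ J.rootSpace H (-β),
    z = J.br x y}

/-- `L_S = H_S ⊕ V_S`, the subalgebra associated to a set of roots `S`. -/
def decIdeal (J : DeltaJordanLie K L) (H : Submodule K L)
    (S : Set (Module.Dual K H)) : Submodule K L :=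
  rootSpan J H S ⊔ ⨆ β ∈ S, J.rootSpace H β

section Aux
variable (J : DeltaJordanLie K L) (H : Submodule K L)

lemma delta_sq : J.delta * J.delta = 1 := by
  rcases J.delta_pm with h | h <;> rw [h] <;> ring

lemma delta_ne_zero : J.delta ≠ 0 := by
  rcases J.delta_pm with h | h <;> rw [h] <;> norm_num

lemma mem_rootSpace_iff {γ : Module.Dual K H} {x : L} :
    x ∈ J.rootSpace H γ ↔ ∀ h : H, J.br (h : L) x = γ h • x := Iff.rfl

lemma br_rootSpace {γ μ : Module.Dual K H} {x z : L}
    (hx : x ∈ J.rootSpace H γ) (hz : z ∈ J.rootSpace H μ) :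
    J.br x z ∈ J.rootSpace H (J.delta • (γ + μ)) := by
  intro h
  rw [J.jacobi, hx h, hz h, map_smul (J.br x), LinearMap.map_smul₂]
  simp only [LinearMap.smul_apply, LinearMap.add_apply, smul_smul, ← add_smul]
  rw [smul_eq_mul, mul_add]

end Aux
section Conn
variable (J : DeltaJordanLie K L) (H : Submodule K L)

lemma connSum_congr (d : K) (f g : ℕ → Module.Dual K H) (n : ℕ)
    (h : ∀ i ≤ n, f i = g i) : ∀ k ≤ n, connSum d f k = connSum d g k := by
  intro k hk
  induction k with
  | zero => exact h 0 (Nat.zero_le n)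
  | succ m ih =>
      rw [connSum, connSum, ih (Nat.le_of_succ_le hk), h (m + 1) hk]

lemma conn_self {α : Module.Dual K H} (hα : α ∈ J.roots H) : Connected J H α α :=
  ⟨0, fun _ => α, fun _ _ => hα, rfl, fun k hk => absurd hk (Nat.not_lt_zero k), Or.inl rfl⟩

lemma conn_neg {α σ : Module.Dual K H} (hc : Connected J H α σ) : Connected J H α (-σ) := by
  obtain ⟨n, f, hr, h0, hmid, hend⟩ := hc
  refine ⟨n, f, hr, h0, hmid, ?_⟩
  rcases hend with h | h
  · exact Or.inr (by rw [neg_neg]; exact h)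
  · exact Or.inl h

lemma conn_extend (hsym : J.SymmetricRoots H) {α σ τ : Module.Dual K H}
    (hc : Connected J H α σ) (hσ : σ ∈ J.roots H) (hτ : τ ∈ J.roots H) :
    Connected J H α (J.delta • (σ + τ)) := by
  obtain ⟨n, f, hr, h0, hmid, hend⟩ := hc
  rcases hend with he | he
  · refine ⟨n + 1, fun i => if i ≤ n then f i else τ, ?_, ?_, ?_, ?_⟩
    · intro i hi
      by_cases h : i ≤ n
      · simpa [h] using hr i h
      · simpa [h] using hτ
    · simpa [Nat.zero_le n] using h0
    · intro k hk
      have hk' : k ≤ n := Nat.lt_succ_iff.mp hk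
      have heq : connSum J.delta (fun i => if i ≤ n then f i else τ) k = connSum J.delta f k :=
        connSum_congr H J.delta _ f n (fun i hi => if_pos hi) k hk'
      rw [heq]
      rcases lt_or_eq_of_le hk' with h | h
      · exact hmid k h
      · rw [h, he]; exact hσ
    · left
      rw [connSum, connSum_congr H J.delta _ f n (fun i hi => if_pos hi) n le_rfl, he,
        if_neg (Nat.not_succ_le_self n)]
  · refine ⟨n + 1, fun i => if i ≤ n then f i else -τ, ?_, ?_, ?_, ?_⟩
    · intro i hi
      by_cases h : i ≤ n
      · simpa [h] using hr i h
      · simpa [h] using hsym τ hτ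
    · simpa [Nat.zero_le n] using h0
    · intro k hk
      have hk' : k ≤ n := Nat.lt_succ_iff.mp hk
      rw [connSum_congr H J.delta _ f n (fun i hi => if_pos hi) k hk']
      rcases lt_or_eq_of_le hk' with h | h
      · exact hmid k h
      · rw [h, he]; exact hsym σ hσ
    · right
      rw [connSum, connSum_congr H J.delta _ f n (fun i hi => if_pos hi) n le_rfl, he,
        if_neg (Nat.not_succ_le_self n), ← neg_add, smul_neg]

lemma mem_cr_neg (hsym : J.SymmetricRoots H) {α γ : Module.Dual K H}
    (h : γ ∈ connectedRoots J H α) : -γ ∈ connectedRoots J H α :=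
  ⟨hsym γ h.1, conn_neg J H h.2⟩

lemma smul_delta_root {μ : Module.Dual K H} (hsym : J.SymmetricRoots H)
    (hμ : μ ∈ J.roots H) : J.delta • μ ∈ J.roots H := by
  rcases J.delta_pm with h | h
  · rw [h, one_smul]; exact hμ
  · have e : J.delta • μ = -μ := by rw [h]; module
    rw [e]; exact hsym μ hμ

lemma mem_S_of (hsym : J.SymmetricRoots H) {α γ μ : Module.Dual K H}
    (hγ : γ ∈ connectedRoots J H α) (hμ : μ ∈ J.roots H)
    (hν : J.delta • (γ + μ) ∈ J.roots H) : J.delta • (γ + μ) ∈ connectedRoots J H α :=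
  ⟨hν, conn_extend J H hsym hγ.2 hγ.1 hμ⟩

lemma mem_S_back (hsym : J.SymmetricRoots H) {α σ μ : Module.Dual K H}
    (hν : J.delta • (σ + μ) ∈ connectedRoots J H α)
    (hσ : σ ∈ J.roots H) (hμ : μ ∈ J.roots H) : μ ∈ connectedRoots J H α := by
  have hτ : -(J.delta • σ) ∈ J.roots H := hsym _ (smul_delta_root J H hsym hσ)
  have h := conn_extend J H hsym hν.2 hν.1 hτ
  have heq : J.delta • (J.delta • (σ + μ) + -(J.delta • σ)) = μ := by
    rw [smul_add, smul_smul, delta_sq, one_smul, smul_neg, smul_smul, delta_sq, one_smul]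
    abel
  rw [heq] at h
  exact ⟨hμ, h⟩

end Conn
section Ideal
variable (J : DeltaJordanLie K L) (H : Submodule K L)

lemma br_h_eq_zero (hsym : J.SymmetricRoots H) {α γ μ : Module.Dual K H}
    (hγ : γ ∈ connectedRoots J H α) (hμ : μ ∈ J.roots H)
    (hμS : μ ∉ connectedRoots J H α) {x y z : L}
    (hx : x ∈ J.rootSpace H γ) (hy : y ∈ J.rootSpace H (-γ)) (hz : z ∈ J.rootSpace H μ) :
    J.br (J.br x y) z = 0 := by
  have hγ' : -γ ∈ connectedRoots J H α := mem_cr_neg J H hsym hγ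
  have hxz : J.br x z = 0 := by
    have hm := br_rootSpace J H hx hz
    by_cases h0 : J.delta • (γ + μ) = 0
    · exfalso
      have h1 : γ + μ = 0 := by
        rcases smul_eq_zero.mp h0 with h | h
        · exact absurd h (delta_ne_zero J)
        · exact h
      have h2 : μ = -γ := eq_neg_of_add_eq_zero_right h1
      exact hμS (h2 ▸ hγ')
    · by_cases hbot : J.rootSpace H (J.delta • (γ + μ)) = ⊥
      · rw [hbot] at hm; exact (Submodule.mem_bot K).mp hm
      · exact absurd
          (mem_S_back J H hsym (mem_S_of J H hsym hγ hμ ⟨h0, hbot⟩) hγ.1 hμ) hμS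
  have hyz : J.br y z = 0 := by
    have hm := br_rootSpace J H hy hz
    by_cases h0 : J.delta • (-γ + μ) = 0
    · exfalso
      have h1 : -γ + μ = 0 := by
        rcases smul_eq_zero.mp h0 with h | h
        · exact absurd h (delta_ne_zero J)
        · exact h
      have h2 : μ = γ := by
        have := eq_neg_of_add_eq_zero_right h1
        rw [this, neg_neg]
      exact hμS (h2 ▸ hγ)
    · by_cases hbot : J.rootSpace H (J.delta • (-γ + μ)) = ⊥
      · rw [hbot] at hm; exact (Submodule.mem_bot K).mp hm
      · exact absurd
          (mem_S_back J H hsym (mem_S_of J H hsym hγ' hμ ⟨h0, hbot⟩) hγ'.1 hμ) hμS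
  have hj := J.jacobi x y z
  rw [hyz, hxz, map_zero, map_zero, smul_zero, add_zero] at hj
  rcases smul_eq_zero.mp hj.symm with h | h
  · exact absurd h (delta_ne_zero J)
  · exact h

lemma rootSpan_le_H (hs : J.IsSplitting H) (S : Set (Module.Dual K H)) :
    rootSpan J H S ≤ H := by
  have hle : rootSpan J H S ≤ J.rootSpace H 0 := by
    refine Submodule.span_le.2 ?_
    rintro w ⟨γ, hγ, u, hu, v, hv, rfl⟩
    have h := br_rootSpace J H hu hv
    have e : J.delta • (γ + -γ) = 0 := by rw [add_neg_cancel, smul_zero]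
    rwa [e] at h
  rwa [hs.zero_rootSpace] at hle

lemma rootSpace_le_decIdeal (S : Set (Module.Dual K H)) {γ : Module.Dual K H} (hγ : γ ∈ S) :
    J.rootSpace H γ ≤ decIdeal J H S :=
  le_trans (le_iSup₂ (f := fun β (_ : β ∈ S) => J.rootSpace H β) γ hγ) le_sup_right

lemma decIdeal_isIdeal (hs : J.IsSplitting H) (hsym : J.SymmetricRoots H)
    (α : Module.Dual K H) :
    IsIdeal J (decIdeal J H (connectedRoots J H α)) := by
  set S := connectedRoots J H α with hSdef
  set I := decIdeal J H S with hIdef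
  have key : ∀ (μ : Module.Dual K H), ∀ z ∈ J.rootSpace H μ, ∀ x ∈ I, J.br x z ∈ I := by
    intro μ z hz
    suffices h : I ≤ Submodule.comap (J.br.flip z) I by
      intro x hx
      simpa [Submodule.mem_comap] using h hx
    refine sup_le ?_ ?_
    · refine Submodule.span_le.2 ?_
      rintro w ⟨γ, hγ, u, hu, v, hv, rfl⟩
      simp only [Set.mem_preimage, SetLike.mem_coe, Submodule.mem_comap, LinearMap.flip_apply]
      have hH : J.br u v ∈ H :=
        rootSpan_le_H J H hs S (Submodule.subset_span ⟨γ, hγ, u, hu, v, hv, rfl⟩)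
      by_cases hμ0 : μ = 0
      · subst hμ0
        have hzH : z ∈ H := hs.zero_rootSpace ▸ hz
        rw [hs.abelian _ hH _ hzH]
        exact zero_mem I
      · by_cases hbot : J.rootSpace H μ = ⊥
        · have hz0 : z = 0 := by rw [hbot] at hz; exact (Submodule.mem_bot K).mp hz
          rw [hz0, map_zero]
          exact zero_mem I
        · have hμr : μ ∈ J.roots H := ⟨hμ0, hbot⟩
          by_cases hμS : μ ∈ S
          · have h2 : J.br (J.br u v) z = μ ⟨J.br u v, hH⟩ • z := hz ⟨J.br u v, hH⟩
            rw [h2]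
            exact Submodule.smul_mem I _ (rootSpace_le_decIdeal J H S hμS hz)
          · rw [br_h_eq_zero J H hsym hγ hμr hμS hu hv hz]
            exact zero_mem I
    · refine iSup_le fun γ => iSup_le fun hγ => ?_
      intro w hw
      simp only [Submodule.mem_comap, LinearMap.flip_apply]
      by_cases hμ0 : μ = 0
      · subst hμ0
        have hzH : z ∈ H := hs.zero_rootSpace ▸ hz
        have e : J.br w z = -(J.delta • (γ ⟨z, hzH⟩ • w)) := by
          rw [J.anti w z]
          congr 1
          congr 1
          exact hw ⟨z, hzH⟩
        rw [e]
        exact Submodule.neg_mem _ (Submodule.smul_mem _ _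
          (Submodule.smul_mem _ _ (rootSpace_le_decIdeal J H S hγ hw)))
      · by_cases hbot : J.rootSpace H μ = ⊥
        · have hz0 : z = 0 := by rw [hbot] at hz; exact (Submodule.mem_bot K).mp hz
          rw [hz0, map_zero]
          exact zero_mem I
        · have hμr : μ ∈ J.roots H := ⟨hμ0, hbot⟩
          have hm := br_rootSpace J H hw hz
          by_cases h0 : J.delta • (γ + μ) = 0
          · have h1 : γ + μ = 0 := by
              rcases smul_eq_zero.mp h0 with h | h
              · exact absurd h (delta_ne_zero J)
              · exact h
            have h2 : μ = -γ := eq_neg_of_add_eq_zero_right h1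
            subst h2
            exact Submodule.mem_sup_left (Submodule.subset_span ⟨γ, hγ, w, hw, z, hz, rfl⟩)
          · by_cases hbot2 : J.rootSpace H (J.delta • (γ + μ)) = ⊥
            · have : J.br w z = 0 := by rw [hbot2] at hm; exact (Submodule.mem_bot K).mp hm
              rw [this]; exact zero_mem I
            · exact rootSpace_le_decIdeal J H S
                (mem_S_of J H hsym hγ hμr ⟨h0, hbot2⟩) hm
  intro x hx y
  have h1 : J.br x y ∈ I := by
    have hy : y ∈ (⨆ μ : Module.Dual K H, J.rootSpace H μ) := by
      rw [hs.decomp]; exact Submodule.mem_top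
    have hle : (⨆ μ : Module.Dual K H, J.rootSpace H μ) ≤ Submodule.comap (J.br x) I :=
      iSup_le fun μ z hz => key μ z hz x hx
    exact hle hy
  refine ⟨h1, ?_⟩
  rw [J.anti y x]
  exact Submodule.neg_mem _ (Submodule.smul_mem _ _ h1)

end Ideal

/-- if `L` is simple then any two nonzero roots are connected. -/
theorem stmt8 (J : DeltaJordanLie K L) (H : Submodule K L) (hs : J.IsSplitting H)
    (hsym : J.SymmetricRoots H)
    (hsimple : (∃ x y : L, J.br x y ≠ 0) ∧
      ∀ I : Submodule K L, IsIdeal J I → I = ⊥ ∨ I = ⊤) :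
    ∀ α ∈ J.roots H, ∀ β ∈ J.roots H, Connected J H α β := by
  intro α hα β hβ
  by_contra hcon
  set S := connectedRoots J H α with hSdef
  set I := decIdeal J H S with hIdef
  have hideal : IsIdeal J I := decIdeal_isIdeal J H hs hsym α
  have hαS : α ∈ S := ⟨hα, conn_self J H hα⟩
  have hIne : I ≠ ⊥ := by
    intro hbot
    have h1 : J.rootSpace H α ≤ I := rootSpace_le_decIdeal J H S hαS
    rw [hbot, le_bot_iff] at h1
    exact hα.2 h1
  have hItop : I = ⊤ := (hsimple.2 I hideal).resolve_left hIne
  have hle : I ≤ ⨆ (j : Module.Dual K H) (_ : j ≠ β), J.rootSpace H j := by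
    refine sup_le ?_ ?_
    · refine le_trans (rootSpan_le_H J H hs S) ?_
      have h0 : J.rootSpace H 0 ≤ ⨆ (j : Module.Dual K H) (_ : j ≠ β), J.rootSpace H j :=
        le_iSup₂ (f := fun (j : Module.Dual K H) (_ : j ≠ β) => J.rootSpace H j)
          0 (fun h => hβ.1 h.symm)
      rwa [hs.zero_rootSpace] at h0
    · refine iSup_le fun γ => iSup_le fun hγ => ?_
      have hγβ : γ ≠ β := fun h => hcon (h ▸ hγ.2)
      exact le_iSup₂ (f := fun (j : Module.Dual K H) (_ : j ≠ β) => J.rootSpace H j) γ hγβ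
  have hdisj := hs.indep β
  have hβle : J.rootSpace H β ≤ ⨆ (j : Module.Dual K H) (_ : j ≠ β), J.rootSpace H j :=
    le_trans (le_top.trans_eq hItop.symm) hle
  exact hβ.2 (hdisj.eq_bot_of_le hβle)
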